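/- Let λ_l = ∑_{j=0}^{min(l,m)} C(l,j)·C(m,j)·n̄^{m+l−2j}/(1+n̄)^{m+l+1} for a fixed nonnegative integer m and n̄ > 0. Then λ is a probability distribution on the nonnegative integers with mean ∑_l l·λ_l = m + n̄. -/

import Mathlib

open Finset

private lemma auxA (t : ℝ) (m : ℕ) :
    ∑ j ∈ range (m + 1), (m.choose j : ℝ) * t ^ (m - j) = (1 + t) ^ m := by
  rw [add_pow]
  refine Finset.sum_congr rfl fun j hj => ?_
  simp [mul_comm]

private lemma auxB (t : ℝ) (m : ℕ) :
    (1 + t) * ∑ j ∈ range (m + 1), (j : ℝ) * (m.choose j : ℝ) * t ^ (m - j)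
      = m * (1 + t) ^ m := by
  cases m with
  | zero => simp
  | succ m' =>
    rw [Finset.sum_range_succ']
    have hstep : ∀ i ∈ range (m' + 1),
        ((i + 1 : ℕ) : ℝ) * (((m' + 1).choose (i + 1) : ℕ) : ℝ) * t ^ (m' + 1 - (i + 1))
          = ((m' : ℝ) + 1) * ((m'.choose i : ℝ) * t ^ (m' - i)) := by
      intro i _
      have h' : ((m' : ℝ) + 1) * (m'.choose i : ℝ)
          = (((m' + 1).choose (i + 1) : ℕ) : ℝ) * ((i : ℝ) + 1) := by
        exact_mod_cast Nat.add_one_mul_choose_eq m' i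
      have he : m' + 1 - (i + 1) = m' - i := by omega
      rw [he]
      push_cast
      linear_combination -t ^ (m' - i) * h'
    rw [Finset.sum_congr rfl hstep, ← Finset.mul_sum, auxA t m']
    simp only [Nat.cast_zero, zero_mul, add_zero]
    push_cast
    ring

private lemma aux_hasSum_choose (j : ℕ) {x : ℝ} (hx : |x| < 1) :
    HasSum (fun n : ℕ => ((n + j).choose j : ℝ) * x ^ n) (1 / (1 - x) ^ (j + 1)) :=
  hasSum_choose_mul_geometric_of_norm_lt_one j (by simpa using hx)

private lemma aux_hasSum_mul_choose (j : ℕ) {x : ℝ} (hx : |x| < 1) :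
    HasSum (fun n : ℕ => (n : ℝ) * ((n + j).choose j : ℝ) * x ^ n)
      (((j : ℝ) + 1) * x * (1 / (1 - x) ^ (j + 2))) := by
  have h1 := (aux_hasSum_choose (j + 1) hx).mul_right x
  have h3 : HasSum (fun n : ℕ => (((n + 1) + j).choose (j + 1) : ℝ) * x ^ (n + 1))
      (1 / (1 - x) ^ (j + 2) * x) := by
    convert h1 using 2 with n
    · rfl
    rw [pow_succ]
    have : n + 1 + j = n + (j + 1) := by omega
    rw [this]
    ring
  have h4 := (hasSum_nat_add_iff (f := fun n : ℕ => ((n + j).choose (j + 1) : ℝ) * x ^ n) 1).mp h3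
  have h5 : HasSum (fun n : ℕ => ((n + j).choose (j + 1) : ℝ) * x ^ n)
      (1 / (1 - x) ^ (j + 2) * x) := by
    simpa [Nat.choose_eq_zero_of_lt (Nat.lt_succ_self j)] using h4
  have h6 := h5.mul_left ((j : ℝ) + 1)
  have hfun : (fun n : ℕ => (n : ℝ) * ((n + j).choose j : ℝ) * x ^ n)
      = fun n : ℕ => ((j : ℝ) + 1) * (((n + j).choose (j + 1) : ℕ) : ℝ) * x ^ n := by
    funext n
    have h' : (((n + j).choose (j + 1) : ℕ) : ℝ) * ((j : ℝ) + 1)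
        = ((n + j).choose j : ℝ) * (n : ℝ) := by
      have h := Nat.choose_succ_right_eq (n + j) j
      have he : n + j - j = n := by omega
      rw [he] at h
      exact_mod_cast h
    linear_combination -x ^ n * h'
  rw [hfun]
  convert h6 using 1
  · rfl
  · funext n; ring
  · ring

/-- The photon-number distribution of the output of the additive noise
channel with noise variance `n̄ > 0` applied to the photon number state `|m⟩`:
`λ_l = ∑_{j=0}^{min(l,m)} C(l,j) C(m,j) n̄^{m+l−2j} / (1+n̄)^{m+l+1}`.
It is a probability distribution on `ℕ` with mean `m + n̄`. -/
theorem additive_noise_number_state_output_distribution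
    (nbar : ℝ) (hnbar : 0 < nbar) (m : ℕ)
    (lam : ℕ → ℝ)
    (hlam : ∀ l, lam l = ∑ j ∈ Finset.range (min l m + 1),
        (l.choose j : ℝ) * (m.choose j : ℝ) *
        nbar ^ (m + l - 2 * j) / (1 + nbar) ^ (m + l + 1)) :
    (∀ l, 0 ≤ lam l) ∧ (∑' l, lam l = 1) ∧
    (∑' l : ℕ, (l : ℝ) * lam l = (m : ℝ) + nbar) := by
  have hs : (0 : ℝ) < 1 + nbar := by linarith
  have hs0 : (1 + nbar : ℝ) ≠ 0 := ne_of_gt hs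
  set t : ℝ := nbar with htdef
  set x : ℝ := t / (1 + t) with hxdef
  have hx0 : 0 ≤ x := div_nonneg hnbar.le hs.le
  have hx1 : x < 1 := by rw [hxdef, div_lt_one hs]; linarith
  have hxabs : |x| < 1 := by rw [abs_of_nonneg hx0]; exact hx1
  have h1x : 1 - x = 1 / (1 + t) := by rw [hxdef]; field_simp; ring
  set F : ℕ → ℕ → ℝ := fun j l =>
    (l.choose j : ℝ) * (m.choose j : ℝ) * t ^ (m + l - 2 * j) / (1 + t) ^ (m + l + 1) with hF
  have hlam' : ∀ l, lam l = ∑ j ∈ range (m + 1), F j l := by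
    intro l
    rw [hlam l]
    apply Finset.sum_subset
    · intro j hj
      simp only [mem_range] at hj ⊢
      omega
    · intro j hj hj'
      simp only [mem_range] at hj hj'
      have hlj : l < j := by omega
      simp [hF, Nat.choose_eq_zero_of_lt hlj]
  have hFnonneg : ∀ j l, 0 ≤ F j l := by
    intro j l
    apply div_nonneg
    · have := hnbar.le
      positivity
    · positivity
  -- per-j sums
  set c : ℕ → ℝ := fun j => (m.choose j : ℝ) * t ^ (m - j) / (1 + t) ^ (m + 1) with hc
  set G : ℕ → ℕ → ℝ := fun j l => (l.choose j : ℝ) * t ^ (l - j) / (1 + t) ^ l with hG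
  have hFG : ∀ j, j ≤ m → ∀ l, F j l = c j * G j l := by
    intro j hj l
    rcases lt_or_ge l j with hlj | hjl
    · simp [hF, hG, Nat.choose_eq_zero_of_lt hlj]
    · simp only [hF, hG, hc]
      have h1 : m + l - 2 * j = (m - j) + (l - j) := by omega
      have h2 : m + l + 1 = (m + 1) + l := by omega
      rw [h1, h2, pow_add, pow_add]
      field_simp
  have hGshift : ∀ j n, G j (n + j) = ((n + j).choose j : ℝ) * x ^ n * (1 / (1 + t) ^ j) := by
    intro j n
    simp only [hG, Nat.add_sub_cancel, hxdef, div_pow]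
    rw [pow_add]
    field_simp
  have hGzero : ∀ j i, i < j → G j i = 0 := by
    intro j i hij
    simp [hG, Nat.choose_eq_zero_of_lt hij]
  have hx1s : 1 / (1 - x) = 1 + t := by rw [h1x]; field_simp
  have hval : ∀ k : ℕ, (1 : ℝ) / (1 - x) ^ k = (1 + t) ^ k := by
    intro k
    rw [h1x, div_pow, one_pow, one_div, one_div, inv_inv]
  have hGsum : ∀ j, j ≤ m → HasSum (G j) (1 + t) := by
    intro j hj
    have h1 := (aux_hasSum_choose j hxabs).mul_right (1 / (1 + t) ^ j)
    have h2 : HasSum (fun n : ℕ => G j (n + j)) (1 + t) := by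
      have hv : 1 / (1 - x) ^ (j + 1) * (1 / (1 + t) ^ j) = 1 + t := by
        rw [hval]
        rw [pow_succ]
        field_simp
      rw [← hv]
      have heq : (fun n : ℕ => G j (n + j))
          = fun n : ℕ => ((n + j).choose j : ℝ) * x ^ n * (1 / (1 + t) ^ j) := by
        funext n; exact hGshift j n
      rw [heq]
      exact h1
    have h3 := (hasSum_nat_add_iff (f := G j) j).mp h2
    have hzero : ∑ i ∈ range j, G j i = 0 :=
      Finset.sum_eq_zero fun i hi => hGzero j i (mem_range.mp hi)
    rwa [hzero, add_zero] at h3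
  have hGsum' : ∀ j, j ≤ m →
      HasSum (fun l : ℕ => (l : ℝ) * G j l) ((1 + t) * ((j : ℝ) * t + t + j)) := by
    intro j hj
    have hA := (aux_hasSum_mul_choose j hxabs).add ((aux_hasSum_choose j hxabs).mul_left (j : ℝ))
    have h1 := hA.mul_right (1 / (1 + t) ^ j)
    have h2 : HasSum (fun n : ℕ => ((n + j : ℕ) : ℝ) * G j (n + j)) ((1 + t) * ((j : ℝ) * t + t + j)) := by
      have hv : (((j : ℝ) + 1) * x * (1 / (1 - x) ^ (j + 2)) + (j : ℝ) * (1 / (1 - x) ^ (j + 1)))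
          * (1 / (1 + t) ^ j) = (1 + t) * ((j : ℝ) * t + t + j) := by
        rw [hval, hval, hxdef]
        have h2' : (1 + t) ^ (j + 2) = (1 + t) ^ j * (1 + t) ^ 2 := by rw [pow_add]
        have h1' : (1 + t) ^ (j + 1) = (1 + t) ^ j * (1 + t) := by rw [pow_succ]
        rw [h2', h1']
        field_simp
      rw [← hv]
      have heq : (fun n : ℕ => ((n + j : ℕ) : ℝ) * G j (n + j))
          = fun n : ℕ => ((n : ℝ) * ((n + j).choose j : ℝ) * x ^ n
              + (j : ℝ) * (((n + j).choose j : ℝ) * x ^ n)) * (1 / (1 + t) ^ j) := by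
        funext n
        rw [hGshift j n]
        push_cast
        ring
      rw [heq]
      exact h1
    have h3 := (hasSum_nat_add_iff (f := fun l : ℕ => (l : ℝ) * G j l) j).mp h2
    have hzero : ∑ i ∈ range j, (i : ℝ) * G j i = 0 :=
      Finset.sum_eq_zero fun i hi => by rw [hGzero j i (mem_range.mp hi), mul_zero]
    rwa [hzero, add_zero] at h3
  have hFsum : ∀ j ∈ range (m + 1), HasSum (F j) (c j * (1 + t)) := by
    intro j hj
    have hjm : j ≤ m := by simpa [Nat.lt_succ_iff] using mem_range.mp hj
    have heq : F j = fun l => c j * G j l := funext fun l => hFG j hjm l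
    rw [heq]
    exact (hGsum j hjm).mul_left (c j)
  have hFsum' : ∀ j ∈ range (m + 1),
      HasSum (fun l : ℕ => (l : ℝ) * F j l) (c j * ((1 + t) * ((j : ℝ) * t + t + j))) := by
    intro j hj
    have hjm : j ≤ m := by simpa [Nat.lt_succ_iff] using mem_range.mp hj
    have heq : (fun l : ℕ => (l : ℝ) * F j l) = fun l : ℕ => c j * ((l : ℝ) * G j l) := by
      funext l
      rw [hFG j hjm l]
      ring
    rw [heq]
    exact (hGsum' j hjm).mul_left (c j)
  have hlamSum : HasSum lam (∑ j ∈ range (m + 1), c j * (1 + t)) := by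
    have h := hasSum_sum hFsum
    have heq : lam = fun l => ∑ j ∈ range (m + 1), F j l := funext hlam'
    rw [heq]
    exact h
  have hlamSum' : HasSum (fun l : ℕ => (l : ℝ) * lam l)
      (∑ j ∈ range (m + 1), c j * ((1 + t) * ((j : ℝ) * t + t + j))) := by
    have h := hasSum_sum hFsum'
    have heq : (fun l : ℕ => (l : ℝ) * lam l)
        = fun l : ℕ => ∑ j ∈ range (m + 1), (l : ℝ) * F j l := by
      funext l
      rw [hlam' l, Finset.mul_sum]
    rw [heq]
    exact h
  -- value computations
  have hS1 : ∑ j ∈ range (m + 1), c j * (1 + t) = 1 := by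
    have : ∀ j ∈ range (m + 1), c j * (1 + t)
        = (m.choose j : ℝ) * t ^ (m - j) * ((1 + t) / (1 + t) ^ (m + 1)) := by
      intro j _
      simp only [hc]
      ring
    rw [Finset.sum_congr rfl this, ← Finset.sum_mul, auxA t m]
    rw [pow_succ]
    field_simp
  have hS2 : ∑ j ∈ range (m + 1), c j * ((1 + t) * ((j : ℝ) * t + t + j)) = (m : ℝ) + t := by
    have hexp : ∀ j ∈ range (m + 1), c j * ((1 + t) * ((j : ℝ) * t + t + j))
        = ((j : ℝ) * (m.choose j : ℝ) * t ^ (m - j)) * ((1 + t) / (1 + t) ^ m)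
          + ((m.choose j : ℝ) * t ^ (m - j)) * (t / (1 + t) ^ m) := by
      intro j _
      simp only [hc]
      rw [pow_succ]
      field_simp
      ring
    rw [Finset.sum_congr rfl hexp, Finset.sum_add_distrib, ← Finset.sum_mul, ← Finset.sum_mul,
      auxA t m]
    have hB := auxB t m
    have hpow : (0 : ℝ) < (1 + t) ^ m := pow_pos hs m
    have h1 : (∑ j ∈ range (m + 1), (j : ℝ) * (m.choose j : ℝ) * t ^ (m - j)) * ((1 + t) / (1 + t) ^ m)
        = (m : ℝ) := by
      rw [mul_div_assoc', mul_comm _ (1 + t), hB]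
      field_simp
    rw [h1]
    field_simp
  refine ⟨fun l => by rw [hlam' l]; exact Finset.sum_nonneg fun j _ => hFnonneg j l, ?_, ?_⟩
  · rw [hlamSum.tsum_eq, hS1]
  · rw [hlamSum'.tsum_eq, hS2]
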